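/- If u₁, u₂, u₃, u₄ are four solutions of the Riccati equation u' = f(x) + g(x)u + h(x)u², then the cross-ratio ((u₄ − u₁)/(u₄ − u₂))·((u₃ − u₂)/(u₃ − u₁)) is constant (its derivative vanishes) on any interval where the relevant differences are nonzero. -/

import Mathlib

/-- The cross-ratio of four solutions of a Riccati equation is constant: its
derivative vanishes on any interval where the relevant differences are nonzero. -/
theorem riccati_cross_ratio_constant
    (f g h u₁ u₂ u₃ u₄ : ℝ → ℝ) (I : Set ℝ)
    (h₁ : ∀ x ∈ I, HasDerivAt u₁ (f x + g x * u₁ x + h x * (u₁ x) ^ 2) x)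
    (h₂ : ∀ x ∈ I, HasDerivAt u₂ (f x + g x * u₂ x + h x * (u₂ x) ^ 2) x)
    (h₃ : ∀ x ∈ I, HasDerivAt u₃ (f x + g x * u₃ x + h x * (u₃ x) ^ 2) x)
    (h₄ : ∀ x ∈ I, HasDerivAt u₄ (f x + g x * u₄ x + h x * (u₄ x) ^ 2) x)
    (h42 : ∀ x ∈ I, u₄ x - u₂ x ≠ 0)
    (h31 : ∀ x ∈ I, u₃ x - u₁ x ≠ 0) :
    ∀ x ∈ I, HasDerivAt
      (fun x => ((u₄ x - u₁ x) / (u₄ x - u₂ x)) * ((u₃ x - u₂ x) / (u₃ x - u₁ x)))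
      0 x := by
  intro x hx
  have d₁ := h₁ x hx
  have d₂ := h₂ x hx
  have d₃ := h₃ x hx
  have d₄ := h₄ x hx
  have n42 := h42 x hx
  have n31 := h31 x hx
  have D := (((d₄.sub d₁).div (d₄.sub d₂) n42).mul ((d₃.sub d₂).div (d₃.sub d₁) n31))
  refine D.congr_deriv ?_
  have e42 : u₄ x - u₂ x ≠ 0 := n42
  have e31 : u₃ x - u₁ x ≠ 0 := n31
  simp only [Pi.sub_apply, Pi.div_apply]
  field_simp
  ring
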